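/- Theorem 3 (equality): for N ≥ 3 and any three pairwise distinct positions w, w', w'' in Fin N, the triple correlation of second-order moments satisfies E[X_w² · X_{w'}² · X_{w''}²] = (N²·m₂³ − 3N·m₂·m₄ + 2·m₆)/((N − 1)(N − 2)). -/

import Mathlib

open Finset


/-- Expectation of a real-valued random variable on the finite probability space
`Equiv.Perm (Fin N)` equipped with the uniform probability measure. -/
noncomputable def permExpect (N : ℕ) (f : Equiv.Perm (Fin N) → ℝ) : ℝ :=
  (∑ σ : Equiv.Perm (Fin N), f σ) / (Fintype.card (Equiv.Perm (Fin N)) : ℝ)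

/-- Empirical `k`-th moment of the amplitude block `u`. -/
noncomputable def empMoment (N : ℕ) (u : Fin N → ℝ) (k : ℕ) : ℝ :=
  (1 / (N : ℝ)) * ∑ i : Fin N, (u i) ^ k

private lemma sum_ite_ne' {N : ℕ} (X : Fin N → ℝ) (a : Fin N) :
    ∑ b, (if a ≠ b then X b else 0) = (∑ b, X b) - X a := by
  have h : ∑ b, (if a = b then X b else 0) = X a := by simp
  rw [← h, ← Finset.sum_sub_distrib]
  apply Finset.sum_congr rfl
  intro b _
  by_cases hb : a = b <;> simp [hb]

private lemma key {N : ℕ} (f : Fin N → ℝ) :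
    ∑ a, ∑ b, ∑ c, (if a ≠ b ∧ a ≠ c ∧ b ≠ c then f a * f b * f c else 0)
      = (∑ i, f i) ^ 3 - 3 * (∑ i, f i) * (∑ i, f i ^ 2) + 2 * ∑ i, f i ^ 3 := by
  set S1 := ∑ i, f i with hS1
  set S2 := ∑ i, f i ^ 2 with hS2
  set S3 := ∑ i, f i ^ 3 with hS3
  have inner : ∀ a b : Fin N,
      ∑ c, (if a ≠ b ∧ a ≠ c ∧ b ≠ c then f a * f b * f c else 0)
        = if a ≠ b then f a * f b * (S1 - f a - f b) else 0 := by
    intro a b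
    by_cases hab : a = b
    · simp [hab]
    · have h1 : ∀ c, (if a ≠ b ∧ a ≠ c ∧ b ≠ c then f a * f b * f c else 0)
          = f a * f b * (if a ≠ c then (if b ≠ c then f c else 0) else 0) := by
        intro c; by_cases h : a ≠ c <;> by_cases h' : b ≠ c <;> simp [h, h', hab]
      simp_rw [h1, ← Finset.mul_sum]
      rw [if_pos (hab : a ≠ b)]
      congr 1
      rw [sum_ite_ne' (fun c => if b ≠ c then f c else 0) a, sum_ite_ne']
      have hba : (if b ≠ a then f a else 0) = f a := by simp [Ne.symm hab]
      rw [hba]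
      ring
  simp_rw [inner]
  have outer : ∀ a : Fin N,
      ∑ b, (if a ≠ b then f a * f b * (S1 - f a - f b) else 0)
        = (S1 * S1 - S2) * f a - (2 * S1) * (f a ^ 2) + 2 * (f a ^ 3) := by
    intro a
    rw [sum_ite_ne' (fun b => f a * f b * (S1 - f a - f b)) a]
    have h2 : ∀ b, f a * f b * (S1 - f a - f b)
        = (f a * S1) * f b - (f a ^ 2) * f b - f a * f b ^ 2 := by intro b; ring
    simp_rw [h2, Finset.sum_sub_distrib, ← Finset.mul_sum, ← hS1, ← hS2]
    ring
  simp_rw [outer, Finset.sum_add_distrib, Finset.sum_sub_distrib, ← Finset.mul_sum,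
    ← hS1, ← hS2, ← hS3]
  ring

private lemma exists_perm3 {N : ℕ} {w w' w'' a b c : Fin N}
    (h1 : w ≠ w') (h2 : w ≠ w'') (h3 : w' ≠ w'')
    (g1 : a ≠ b) (g2 : a ≠ c) (g3 : b ≠ c) :
    ∃ σ : Equiv.Perm (Fin N), σ w = a ∧ σ w' = b ∧ σ w'' = c := by
  set σ₁ : Equiv.Perm (Fin N) := Equiv.swap w a with hσ₁
  have e1 : σ₁ w = a := Equiv.swap_apply_left w a
  set σ₂ : Equiv.Perm (Fin N) := σ₁.trans (Equiv.swap (σ₁ w') b) with hσ₂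
  have e2w' : σ₂ w' = b := by simp [hσ₂, Equiv.swap_apply_left]
  have e2w : σ₂ w = a := by
    have ha1 : a ≠ σ₁ w' := by rw [← e1]; exact fun h => h1 (σ₁.injective h)
    simp only [hσ₂, Equiv.trans_apply, e1]
    exact Equiv.swap_apply_of_ne_of_ne ha1 g1
  set σ₃ : Equiv.Perm (Fin N) := σ₂.trans (Equiv.swap (σ₂ w'') c) with hσ₃
  have e3w'' : σ₃ w'' = c := by simp [hσ₃, Equiv.swap_apply_left]
  have e3w : σ₃ w = a := by
    have ha2 : a ≠ σ₂ w'' := by rw [← e2w]; exact fun h => h2 (σ₂.injective h)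
    simp only [hσ₃, Equiv.trans_apply, e2w]
    exact Equiv.swap_apply_of_ne_of_ne ha2 g2
  have e3w' : σ₃ w' = b := by
    have hb2 : b ≠ σ₂ w'' := by rw [← e2w']; exact fun h => h3 (σ₂.injective h)
    simp only [hσ₃, Equiv.trans_apply, e2w']
    exact Equiv.swap_apply_of_ne_of_ne hb2 g3
  exact ⟨σ₃, e3w, e3w', e3w''⟩

/-- Theorem 3 (equality): for pairwise distinct positions `w, w', w''`,
`E[X_w² · X_{w'}² · X_{w''}²] = (N²·m₂³ − 3N·m₂·m₄ + 2·m₆)/((N−1)(N−2))`. -/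
theorem corr_triple_second (N : ℕ) (hN : 3 ≤ N) (u : Fin N → ℝ)
    (w w' w'' : Fin N) (h1 : w ≠ w') (h2 : w ≠ w'') (h3 : w' ≠ w'') :
    permExpect N (fun σ => (u (σ w)) ^ 2 * (u (σ w')) ^ 2 * (u (σ w'')) ^ 2)
      = ((N : ℝ) ^ 2 * (empMoment N u 2) ^ 3
          - 3 * (N : ℝ) * empMoment N u 2 * empMoment N u 4
          + 2 * empMoment N u 6) / (((N : ℝ) - 1) * ((N : ℝ) - 2)) := by
  classical
  set f : Fin N → ℝ := fun i => u i ^ 2 with hf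
  set φ : Equiv.Perm (Fin N) → Fin N × Fin N × Fin N := fun σ => (σ w, σ w', σ w'') with hφ
  set P : Fin N × Fin N × Fin N → Prop :=
    fun t => t.1 ≠ t.2.1 ∧ t.1 ≠ t.2.2 ∧ t.2.1 ≠ t.2.2 with hP
  set D : Finset (Fin N × Fin N × Fin N) := univ.filter P with hD
  have himg : (univ : Finset (Equiv.Perm (Fin N))).image φ = D := by
    ext t
    obtain ⟨a, b, c⟩ := t
    simp only [hD, hP, Finset.mem_image, Finset.mem_filter, Finset.mem_univ, true_and, hφ]
    constructor
    · rintro ⟨σ, hσ⟩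
      simp only [Prod.mk.injEq] at hσ
      obtain ⟨rfl, rfl, rfl⟩ := hσ
      exact ⟨fun h => h1 (σ.injective h), fun h => h2 (σ.injective h),
        fun h => h3 (σ.injective h)⟩
    · rintro ⟨g1, g2, g3⟩
      obtain ⟨σ, ha, hb, hc⟩ := exists_perm3 h1 h2 h3 g1 g2 g3
      exact ⟨σ, by simp [ha, hb, hc]⟩
  set c₀ : ℕ := ((univ : Finset (Equiv.Perm (Fin N))).filter
    (fun σ => φ σ = (w, w', w''))).card with hc₀
  have hc₀pos : 0 < c₀ := by
    apply Finset.card_pos.mpr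
    exact ⟨1, by simp [hφ]⟩
  have hfib : ∀ t ∈ D, ((univ : Finset (Equiv.Perm (Fin N))).filter
      (fun σ => φ σ = t)).card = c₀ := by
    rintro ⟨a, b, c⟩ ht
    simp only [hD, hP, Finset.mem_filter, Finset.mem_univ, true_and] at ht
    obtain ⟨g1, g2, g3⟩ := ht
    obtain ⟨σ₀, ha, hb, hc⟩ := exists_perm3 h1 h2 h3 g1 g2 g3
    apply Finset.card_bij' (fun σ _ => σ₀⁻¹ * σ) (fun τ _ => σ₀ * τ)
    · intro σ hσ
      simp only [Finset.mem_filter, Finset.mem_univ, true_and, hφ, Prod.mk.injEq] at hσ ⊢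
      obtain ⟨ea, eb, ec⟩ := hσ
      refine ⟨?_, ?_, ?_⟩ <;> simp only [Equiv.Perm.mul_apply, ea, eb, ec]
      · rw [← ha]; exact σ₀.symm_apply_apply w
      · rw [← hb]; exact σ₀.symm_apply_apply w'
      · rw [← hc]; exact σ₀.symm_apply_apply w''
    · intro τ hτ
      simp only [Finset.mem_filter, Finset.mem_univ, true_and, hφ, Prod.mk.injEq] at hτ ⊢
      obtain ⟨ea, eb, ec⟩ := hτ
      refine ⟨?_, ?_, ?_⟩ <;> simp only [Equiv.Perm.mul_apply, ea, eb, ec]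
      · exact ha
      · exact hb
      · exact hc
    · intro σ _; group
    · intro τ _; group
  have hsum : ∀ g : Fin N × Fin N × Fin N → ℝ,
      ∑ σ : Equiv.Perm (Fin N), g (φ σ) = (c₀ : ℝ) * ∑ t ∈ D, g t := by
    intro g
    rw [Finset.sum_comp g φ, himg]
    rw [Finset.sum_congr rfl (fun t ht => by rw [hfib t ht])]
    simp [Finset.mul_sum]
  have hDnested : ∀ g : Fin N × Fin N × Fin N → ℝ,
      ∑ t ∈ D, g t = ∑ a, ∑ b, ∑ c, (if a ≠ b ∧ a ≠ c ∧ b ≠ c then g (a, b, c) else 0) := by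
    intro g
    rw [hD, Finset.sum_filter, Fintype.sum_prod_type]
    apply Finset.sum_congr rfl; intro a _
    rw [Fintype.sum_prod_type]
  have hDsum : ∑ t ∈ D, f t.1 * f t.2.1 * f t.2.2
      = (∑ i, f i) ^ 3 - 3 * (∑ i, f i) * (∑ i, f i ^ 2) + 2 * ∑ i, f i ^ 3 := by
    rw [hDnested]
    exact key f
  have hDcard : (D.card : ℝ) = (N : ℝ) ^ 3 - 3 * (N : ℝ) ^ 2 + 2 * (N : ℝ) := by
    have h1' : (D.card : ℝ) = ∑ t ∈ D, (fun _ => (1:ℝ)) t.1 * 1 * 1 := by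
      simp
    rw [h1']
    have := hDnested (fun t => (fun _ => (1:ℝ)) t.1 * 1 * 1)
    rw [this]
    have := key (fun _ : Fin N => (1 : ℝ))
    simp only [mul_one, one_pow] at this ⊢
    rw [this]
    simp [Finset.card_univ]
    ring
  have hcardP : (Fintype.card (Equiv.Perm (Fin N)) : ℝ) = (c₀ : ℝ) * D.card := by
    have h := hsum (fun _ => (1 : ℝ))
    simpa [Finset.card_univ, mul_comm] using h
  have hmain : ∑ σ : Equiv.Perm (Fin N), (u (σ w)) ^ 2 * (u (σ w')) ^ 2 * (u (σ w'')) ^ 2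
      = (c₀ : ℝ) * ((∑ i, f i) ^ 3 - 3 * (∑ i, f i) * (∑ i, f i ^ 2) + 2 * ∑ i, f i ^ 3) := by
    have h := hsum (fun t => f t.1 * f t.2.1 * f t.2.2)
    rw [hDsum] at h
    exact h
  rw [permExpect, hmain, hcardP, hDcard]
  have hc₀ne : (c₀ : ℝ) ≠ 0 := Nat.cast_ne_zero.mpr hc₀pos.ne'
  rw [mul_div_mul_left _ _ hc₀ne]
  have hN3 : (3 : ℝ) ≤ (N : ℝ) := by exact_mod_cast hN
  have hNne : (N : ℝ) ≠ 0 := by linarith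
  have hN1 : (N : ℝ) - 1 ≠ 0 := by intro h; nlinarith
  have hN2 : (N : ℝ) - 2 ≠ 0 := by intro h; nlinarith
  have hden : (N : ℝ) ^ 3 - 3 * (N : ℝ) ^ 2 + 2 * (N : ℝ)
      = (N : ℝ) * (((N : ℝ) - 1) * ((N : ℝ) - 2)) := by ring
  have hS2 : ∑ i, f i ^ 2 = ∑ i, u i ^ 4 := by
    apply Finset.sum_congr rfl; intro i _; rw [hf]; ring
  have hS3 : ∑ i, f i ^ 3 = ∑ i, u i ^ 6 := by
    apply Finset.sum_congr rfl; intro i _; rw [hf]; ring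
  rw [hS2, hS3, hden, empMoment, empMoment, empMoment]
  have hfu : ∑ i, f i = ∑ i, u i ^ 2 := rfl
  rw [hfu]
  field_simp
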